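/- In a complete binary tree, for any set RL of revoked leaves and any leaf ν ∉ RL, the set Y output by the KUNodes algorithm contains at least one ancestor of ν (where a node is considered an ancestor of itself). Equivalently, Path(ν) ∩ Y ≠ ∅. -/
import Mathlib


open Classical

/-- Nodes of a complete binary tree of height `h` are bit strings of length
at most `h`; the root is `[]`, leaves have length `h`. `TreePath ν` is the
set of nodes on the path from `ν` to the root, inclusive (the prefixes). -/
def TreePath (ν : List Bool) : Set (List Bool) := {θ | θ <+: ν}

/-- The set `X` in the KUNodes algorithm: the union of the paths from the
revoked leaves in `RL` to the root. -/
def KUX (RL : Set (List Bool)) : Set (List Bool) := ⋃ ν ∈ RL, TreePath ν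

/-- The output `Y` of the KUNodes algorithm on a complete binary tree of
height `h`: the children (within the tree) of nodes of `X` that are not
themselves in `X`; if this set is empty, `Y := {root}`. -/
noncomputable def KUNodes (h : ℕ) (RL : Set (List Bool)) : Set (List Bool) :=
  let X := KUX RL
  let Y := {c : List Bool | ∃ θ ∈ X, ∃ b : Bool, c = θ ++ [b] ∧ c.length ≤ h ∧ c ∉ X}
  if Y = ∅ then {([] : List Bool)} else Y

/-- For any revocation list `RL` of leaves and any non-revoked leaf `ν`, the
output `Y` of KUNodes contains at least one ancestor of `ν` (a node being
its own ancestor): `Path(ν) ∩ Y ≠ ∅`. -/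
theorem kunodes_covers_nonrevoked (h : ℕ) (RL : Set (List Bool))
    (hRL : ∀ ν ∈ RL, ν.length = h) (ν : List Bool) (hν : ν.length = h)
    (hνRL : ν ∉ RL) :
    (TreePath ν ∩ KUNodes h RL).Nonempty := by
  set X := KUX RL with hX
  set Y := {c : List Bool | ∃ θ ∈ X, ∃ b : Bool, c = θ ++ [b] ∧ c.length ≤ h ∧ c ∉ X}
    with hY
  have hνX : ν ∉ X := by
    intro hmem
    rcases Set.mem_iUnion₂.mp hmem with ⟨μ, hμ, hpre⟩
    have : ν = μ := List.IsPrefix.eq_of_length hpre (by rw [hν, hRL μ hμ])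
    exact hνRL (this ▸ hμ)
  -- key step: climb down from a prefix in X to a child in Y
  have key : ∀ n (θ : List Bool), θ ∈ X → θ <+: ν → ν.length - θ.length ≤ n →
      ∃ c, c <+: ν ∧ c ∈ Y := by
    intro n
    induction n with
    | zero =>
      intro θ hθX hθν hlen
      have : θ = ν := List.IsPrefix.eq_of_length hθν
        (Nat.le_antisymm hθν.length_le (by omega))
      exact absurd (this ▸ hθX) hνX
    | succ n ih =>
      intro θ hθX hθν hlen
      by_cases heq : θ = ν
      · exact absurd (heq ▸ hθX) hνX
      · obtain ⟨t, ht⟩ := hθν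
        have htne : t ≠ [] := by rintro rfl; simp at ht; exact heq ht
        obtain ⟨b, t', rfl⟩ := List.exists_cons_of_ne_nil htne
        have hθ'ν : θ ++ [b] <+: ν := ⟨t', by simpa using ht⟩
        by_cases hθ'X : θ ++ [b] ∈ X
        · exact ih (θ ++ [b]) hθ'X hθ'ν (by
            have := hθ'ν.length_le
            simp only [List.length_append, List.length_singleton] at this ⊢
            omega)
        · refine ⟨θ ++ [b], hθ'ν, θ, hθX, b, rfl, ?_, hθ'X⟩
          have := hθ'ν.length_le
          omega
  by_cases hRLne : RL = ∅
  · have hXe : X = ∅ := by simp [hX, KUX, hRLne]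
    have hYe : Y = ∅ := by
      ext c; simp [hY, hXe]
    refine ⟨[], List.nil_prefix, ?_⟩
    simp only [KUNodes]
    rw [← hX, ← hY, if_pos hYe]
    rfl
  · obtain ⟨μ, hμ⟩ := Set.nonempty_iff_ne_empty.mpr hRLne
    have hrootX : ([] : List Bool) ∈ X :=
      Set.mem_iUnion₂.mpr ⟨μ, hμ, List.nil_prefix⟩
    obtain ⟨c, hcν, hcY⟩ := key ν.length [] hrootX List.nil_prefix (by simp)
    have hYne : Y ≠ ∅ := Set.nonempty_iff_ne_empty.mp ⟨c, hcY⟩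
    refine ⟨c, hcν, ?_⟩
    simp only [KUNodes]
    rw [← hX, ← hY, if_neg hYne]
    exact hcY
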